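/- Let f be an entropic-uncertainty bound for N MUBs in dimension d. Then every biseparable density operator ρ on (ℂ^d)^{⊗3} satisfies 𝒞_N(ρ) ≤ log₂ d − f/(3N). Equivalently, any tripartite density operator ρ on (ℂ^d)^{⊗3} with 𝒞_N(ρ) > log₂ d − f/(3N) is genuinely tripartite entangled (not biseparable). -/

import Mathlib

open scoped BigOperators ComplexOrder

namespace Paper

noncomputable section

/-- Base-2 Shannon entropy of a finitely indexed probability vector. -/
def shannon {α : Type*} [Fintype α] (p : α → ℝ) : ℝ :=
  ∑ a, -(p a * Real.logb 2 (p a))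

/-- Joint outcome type for `n` subsystems of local dimension `d`. -/
abbrev Idx (n d : ℕ) := Fin n → Fin d

/-- The projector `|ψ⟩⟨ψ|`. -/
def proj {α : Type*} (ψ : α → ℂ) : Matrix α α ℂ :=
  Matrix.of fun x y => ψ x * (starRingEnd ℂ) (ψ y)

/-- A density operator: positive semidefinite with trace one. -/
def IsDensityOp {α : Type*} [Fintype α] [DecidableEq α] (ρ : Matrix α α ℂ) : Prop :=
  ρ.PosSemidef ∧ ρ.trace = 1

/-- `B` is an orthonormal basis of `ℂ^d` (`B i` is the `i`-th basis vector). -/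
def IsONB {d : ℕ} (B : Fin d → Fin d → ℂ) : Prop :=
  ∀ i j, (∑ x, (starRingEnd ℂ) (B i x) * B j x) = if i = j then 1 else 0

/-- Two bases of `ℂ^d` are mutually unbiased. -/
def MutUnbiased {d : ℕ} (B B' : Fin d → Fin d → ℂ) : Prop :=
  ∀ i j, ‖∑ x, (starRingEnd ℂ) (B i x) * B' j x‖ ^ 2 = 1 / d

/-- Joint outcome distribution of measuring the orthonormal basis `B l` on each factor `l`. -/
def jointProb {n d : ℕ} (ρ : Matrix (Idx n d) (Idx n d) ℂ)
    (B : Fin n → Fin d → Fin d → ℂ) (i : Idx n d) : ℝ :=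
  (∑ x : Idx n d, ∑ y : Idx n d,
    (∏ l, (starRingEnd ℂ) (B l (i l) (x l))) * ρ x y * (∏ l, B l (i l) (y l))).re

/-- Marginal distribution of subsystem `l`. -/
def margAt {n d : ℕ} (p : Idx n d → ℝ) (l : Fin n) (i : Fin d) : ℝ :=
  ∑ x : Idx n d, if x l = i then p x else 0

/-- Insert outcome `i` at position `l` into a tuple of outcomes of the other subsystems. -/
def insertAt {n d : ℕ} (l : Fin n) (i : Fin d) (g : {m : Fin n // m ≠ l} → Fin d) : Idx n d :=
  fun m => if h : m = l then i else g ⟨m, h⟩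

/-- Marginal distribution of all subsystems except `l`. -/
def margRest {n d : ℕ} (p : Idx n d → ℝ) (l : Fin n)
    (g : {m : Fin n // m ≠ l} → Fin d) : ℝ :=
  ∑ i : Fin d, p (insertAt l i g)

/-- Mutual information `I(B⁽ˡ⁾ : B⁽ˡ̄⁾)` between the outcome at subsystem `l` and the
outcomes at the remaining subsystems, for the joint outcome distribution `p`. -/
def mutualInfo {n d : ℕ} (p : Idx n d → ℝ) (l : Fin n) : ℝ :=
  shannon (margAt p l) + shannon (margRest p l) - shannon p

/-- The correlation function `C_N(ρ, {B_k^{(l)}})`. -/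
def CNval {n d : ℕ} (N : ℕ) (ρ : Matrix (Idx n d) (Idx n d) ℂ)
    (B : Fin N → Fin n → Fin d → Fin d → ℂ) : ℝ :=
  (1 / (n * N)) * ∑ k, ∑ l, mutualInfo (jointProb ρ (B k)) l

/-- `B k l` is, for each subsystem `l`, a family of `N` pairwise mutually unbiased
orthonormal bases (indexed by `k`). -/
def ValidMUBs {n d : ℕ} (N : ℕ) (B : Fin N → Fin n → Fin d → Fin d → ℂ) : Prop :=
  (∀ k l, IsONB (B k l)) ∧ ∀ l k k', k ≠ k' → MutUnbiased (B k l) (B k' l)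

/-- The set of values `C_N(ρ, ·)` over all admissible choices of MUBs;
`𝒞_N(ρ)` is the supremum of this set. -/
def CNvalues {n d : ℕ} (N : ℕ) (ρ : Matrix (Idx n d) (Idx n d) ℂ) : Set ℝ :=
  {x | ∃ B : Fin N → Fin n → Fin d → Fin d → ℂ, ValidMUBs N B ∧ x = CNval N ρ B}

/-- Single-subsystem reduced state `tr_{l̄} ρ`. -/
def reducedAt {n d : ℕ} (ρ : Matrix (Idx n d) (Idx n d) ℂ) (l : Fin n) :
    Matrix (Fin d) (Fin d) ℂ :=
  Matrix.of fun i j =>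
    ∑ g : {m : Fin n // m ≠ l} → Fin d, ρ (insertAt l i g) (insertAt l j g)

/-- `ω_d = exp(2πi/d)`. -/
def ω (d : ℕ) : ℂ := Complex.exp (2 * Real.pi * Complex.I / d)

/-- The generalized Pauli operator `X_d`. -/
def Xmat (d : ℕ) : Matrix (Fin d) (Fin d) ℂ :=
  Matrix.of fun i j => if (i : ℕ) = ((j : ℕ) + 1) % d then 1 else 0

/-- The generalized Pauli operator `Z_d`. -/
def Zmat (d : ℕ) : Matrix (Fin d) (Fin d) ℂ :=
  Matrix.of fun i j => if i = j then ω d ^ (i : ℕ) else 0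

/-- The generalized Pauli operator `S_{d,(k₁,k₂)} = X_d^{k₁} Z_d^{k₂}`. -/
def Smat (d : ℕ) (k : Fin d × Fin d) : Matrix (Fin d) (Fin d) ℂ :=
  Xmat d ^ (k.1 : ℕ) * Zmat d ^ (k.2 : ℕ)

/-- Apply a local operator `A l` to each tensor factor of a multipartite vector `ψ`,
i.e. the vector `(⊗_l A l) ψ`. -/
def applyLocal {n d : ℕ} (A : Fin n → Matrix (Fin d) (Fin d) ℂ) (ψ : Idx n d → ℂ) :
    Idx n d → ℂ :=
  fun x => ∑ y : Idx n d, (∏ l, A l (x l) (y l)) * ψ y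

/-- The computational (standard) basis of `ℂ^d`, the eigenbasis of `Z_d`. -/
def stdBasis (d : ℕ) : Fin d → Fin d → ℂ :=
  fun i x => if x = i then 1 else 0

/-- The Fourier basis of `ℂ^d`, the eigenbasis of `X_d`. -/
def fourierBasis (d : ℕ) : Fin d → Fin d → ℂ :=
  fun i x => (((Real.sqrt d)⁻¹ : ℝ) : ℂ) * ω d ^ ((i : ℕ) * (x : ℕ))

/-- The `n`-fold tensor product `⊗_l A l` as a matrix on the joint system. -/
def tensorN {n d : ℕ} (A : Fin n → Matrix (Fin d) (Fin d) ℂ) :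
    Matrix (Idx n d) (Idx n d) ℂ :=
  Matrix.of fun x y => ∏ l, A l (x l) (y l)

/-- Full separability of an `n`-partite density operator. -/
def FullySep {n d : ℕ} (ρ : Matrix (Idx n d) (Idx n d) ℂ) : Prop :=
  ∃ (J : ℕ) (p : Fin J → ℝ) (σ : Fin J → Fin n → Matrix (Fin d) (Fin d) ℂ),
    (∀ j, 0 ≤ p j) ∧ (∑ j, p j) = 1 ∧ (∀ j l, IsDensityOp (σ j l)) ∧
    ρ = ∑ j, p j • tensorN (σ j)

/-- generalized GHZ state `(1/√d) ∑_i |i⟩^{⊗n}`. -/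
def GHZvec (d n : ℕ) : Idx n d → ℂ :=
  fun x => if ∀ l l', x l = x l' then (((Real.sqrt d)⁻¹ : ℝ) : ℂ) else 0


/-- Outcome distribution of measuring the basis `B` on the single-system state `σ`. -/
def prob1 {d : ℕ} (σ : Matrix (Fin d) (Fin d) ℂ) (B : Fin d → Fin d → ℂ) (i : Fin d) : ℝ :=
  (∑ x, ∑ y, (starRingEnd ℂ) (B i x) * σ x y * B i y).re

/-- `f` is an entropic-uncertainty bound for `N` MUBs in dimension `d`:
`∑_k H(B_k|σ) ≥ f` for every set of `N` MUBs and every density operator `σ`. -/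
def EntropicBound (d N : ℕ) (f : ℝ) : Prop :=
  ∀ B : Fin N → Fin d → Fin d → ℂ, (∀ k, IsONB (B k)) →
    (∀ k k', k ≠ k' → MutUnbiased (B k) (B k')) →
    ∀ σ : Matrix (Fin d) (Fin d) ℂ, IsDensityOp σ →
      f ≤ ∑ k, shannon (prob1 σ (B k))

/-- Restriction of a joint outcome to the subsystems other than `l`. -/
def restrictAt {n d : ℕ} (l : Fin n) (x : Idx n d) : {m : Fin n // m ≠ l} → Fin d :=
  fun m => x m.1

/-- The operator `A ⊗ T` placed so that `A` acts on subsystem `l` of three subsystems and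
`T` on the remaining two. -/
def assembleAt {d : ℕ} (l : Fin 3) (A : Matrix (Fin d) (Fin d) ℂ)
    (T : Matrix ({m : Fin 3 // m ≠ l} → Fin d) ({m : Fin 3 // m ≠ l} → Fin d) ℂ) :
    Matrix (Idx 3 d) (Idx 3 d) ℂ :=
  Matrix.of fun x y => A (x l) (y l) * T (restrictAt l x) (restrictAt l y)

/-- Biseparability of a tripartite density operator. -/
def Bisep3 {d : ℕ} (ρ : Matrix (Idx 3 d) (Idx 3 d) ℂ) : Prop :=
  ∃ (J : ℕ) (p : Fin J → Fin 3 → ℝ)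
    (σ : Fin J → Fin 3 → Matrix (Fin d) (Fin d) ℂ)
    (τ : (j : Fin J) → (l : Fin 3) →
      Matrix ({m : Fin 3 // m ≠ l} → Fin d) ({m : Fin 3 // m ≠ l} → Fin d) ℂ),
    (∀ j l, 0 ≤ p j l) ∧ (∑ j, ∑ l, p j l) = 1 ∧
    (∀ j l, IsDensityOp (σ j l)) ∧ (∀ j l, IsDensityOp (τ j l)) ∧
    ρ = ∑ j, ∑ l, p j l • assembleAt l (σ j l) (τ j l)



lemma logSum {ι : Type*} [Fintype ι] (u v : ι → ℝ) (hu : ∀ i, 0 ≤ u i) (hv : ∀ i, 0 ≤ v i)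
    (h0 : ∀ i, v i = 0 → u i = 0) :
    (∑ i, u i) * Real.log ((∑ i, u i) / (∑ i, v i)) ≤ ∑ i, u i * Real.log (u i / v i) := by
  set U := ∑ i, u i with hU
  set V := ∑ i, v i with hV
  rcases eq_or_lt_of_le (Finset.sum_nonneg (fun i _ => hv i) : (0:ℝ) ≤ V) with hV0 | hV0
  · have hvz : ∀ i, v i = 0 := by
      intro i
      have := (Finset.sum_eq_zero_iff_of_nonneg (fun i _ => hv i)).mp hV0.symm
      exact this i (Finset.mem_univ i)
    have huz : ∀ i, u i = 0 := fun i => h0 i (hvz i)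
    simp [hU, huz]
  rcases eq_or_lt_of_le (Finset.sum_nonneg (fun i _ => hu i) : (0:ℝ) ≤ U) with hU0 | hU0
  · have huz : ∀ i, u i = 0 := by
      intro i
      have := (Finset.sum_eq_zero_iff_of_nonneg (fun i _ => hu i)).mp hU0.symm
      exact this i (Finset.mem_univ i)
    have hUz : U = 0 := by simp [hU, huz]
    simp [hUz, huz]
  -- main case
  have key : ∀ i, u i * Real.log (U / V) ≤ u i * Real.log (u i / v i) - u i + v i * (U / V) := by
    intro i
    rcases eq_or_lt_of_le (hv i) with hvi | hvi
    · have hui : u i = 0 := h0 i hvi.symm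
      simp [hui, ← hvi]
    rcases eq_or_lt_of_le (hu i) with hui | hui
    · have : 0 ≤ v i * (U / V) := by positivity
      simp [← hui]; linarith
    · have hx : 0 < U * v i / (V * u i) := by positivity
      have hlog := Real.log_le_sub_one_of_pos hx
      have hrw : Real.log (U * v i / (V * u i)) = Real.log (U / V) - Real.log (u i / v i) := by
        rw [Real.log_div (by positivity) (by positivity), Real.log_div (by positivity) (by positivity),
          Real.log_div (by positivity) (by positivity), Real.log_mul (by positivity) (by positivity),
          Real.log_mul (by positivity) (by positivity)]
        ring
      rw [hrw] at hlog
      have := mul_le_mul_of_nonneg_left hlog (hu i)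
      have hexp : u i * (U * v i / (V * u i) - 1) = v i * (U / V) - u i := by
        field_simp
      rw [hexp] at this
      linarith [this]
  have hVne : V ≠ 0 := ne_of_gt hV0
  have hVU : V * (U / V) = U := by field_simp
  calc U * Real.log (U / V) = (∑ i, u i * Real.log (U / V)) - U + V * (U/V) := by
        rw [← Finset.sum_mul, ← hU, hVU]; ring
    _ ≤ (∑ i, (u i * Real.log (u i / v i) - u i + v i * (U / V))) - U + V * (U/V) := by
        have h := Finset.sum_le_sum (f := fun i => u i * Real.log (U / V))
          (g := fun i => u i * Real.log (u i / v i) - u i + v i * (U / V))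
          (s := Finset.univ) (fun i _ => key i)
        linarith
    _ = ∑ i, u i * Real.log (u i / v i) := by
        rw [Finset.sum_add_distrib, Finset.sum_sub_distrib, ← Finset.sum_mul, ← hU, ← hV, hVU]
        ring


/-- negMulLog is superadditive on nonneg families. -/
lemma negMulLog_sum_le {ι : Type*} [Fintype ι] (u : ι → ℝ) (hu : ∀ i, 0 ≤ u i) :
    Real.negMulLog (∑ i, u i) ≤ ∑ i, Real.negMulLog (u i) := by
  have hS : ∀ i, u i ≤ ∑ j, u j := fun i =>
    Finset.single_le_sum (fun j _ => hu j) (Finset.mem_univ i)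
  have key : ∀ i, -(u i * Real.log (∑ j, u j)) ≤ Real.negMulLog (u i) := by
    intro i
    rcases eq_or_lt_of_le (hu i) with h | h
    · simp [← h]
    · have : Real.log (u i) ≤ Real.log (∑ j, u j) := Real.log_le_log h (hS i)
      have := mul_le_mul_of_nonneg_left this (hu i)
      simp only [Real.negMulLog, neg_mul]
      linarith
  calc Real.negMulLog (∑ i, u i) = ∑ i, -(u i * Real.log (∑ j, u j)) := by
        rw [Real.negMulLog, neg_mul, Finset.sum_mul]
        exact (Finset.sum_neg_distrib _).symm
    _ ≤ ∑ i, Real.negMulLog (u i) := Finset.sum_le_sum (fun i _ => key i)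

/-- Entropy of a probability vector is at most log of the cardinality. -/
lemma sum_negMulLog_le_log_card {ι : Type*} [Fintype ι] (p : ι → ℝ) (hp : ∀ i, 0 ≤ p i)
    (hp1 : ∑ i, p i = 1) : ∑ i, Real.negMulLog (p i) ≤ Real.log (Fintype.card ι) := by
  have hne : Nonempty ι := by
    by_contra h
    rw [not_nonempty_iff] at h
    simp [Finset.sum_eq_zero] at hp1
  have hcard : (0:ℝ) < Fintype.card ι := by
    have := Fintype.card_pos (α := ι)
    exact_mod_cast this
  have h := logSum p (fun _ => (Fintype.card ι : ℝ)⁻¹) hp (fun _ => by positivity)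
    (fun i hi => absurd hi (by positivity))
  simp only [hp1, Finset.sum_const, Finset.card_univ, nsmul_eq_mul,
    mul_inv_cancel₀ (ne_of_gt hcard), one_mul, div_one, Real.log_one] at h
  have hterm : ∀ i, p i * Real.log (p i / (Fintype.card ι : ℝ)⁻¹)
      = - Real.negMulLog (p i) + p i * Real.log (Fintype.card ι) := by
    intro i
    rcases eq_or_lt_of_le (hp i) with h' | h'
    · simp [← h', Real.negMulLog]
    · rw [Real.log_div (ne_of_gt h') (by positivity), Real.log_inv, Real.negMulLog]
      ring
  rw [Finset.sum_congr rfl (fun i _ => hterm i), Finset.sum_add_distrib, ← Finset.sum_mul,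
    hp1] at h
  simp only [Finset.sum_neg_distrib] at h
  linarith

/-- Per-group identity: conditional-entropy integrand. -/
lemma group_ent_eq {ι : Type*} [Fintype ι] (P : ι → ℝ) (hP : ∀ i, 0 ≤ P i) :
    ∑ i, Real.negMulLog (P i) - Real.negMulLog (∑ i, P i)
      = -∑ i, P i * Real.log (P i / (∑ j, P j)) := by
  have hterm : ∀ i, P i * Real.log (P i / (∑ j, P j))
      = -Real.negMulLog (P i) - P i * Real.log (∑ j, P j) := by
    intro i
    rcases eq_or_lt_of_le (hP i) with h' | h'
    · simp [← h', Real.negMulLog]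
    · have hSpos : 0 < ∑ j, P j :=
        lt_of_lt_of_le h' (Finset.single_le_sum (fun j _ => hP j) (Finset.mem_univ i))
      rw [Real.log_div (ne_of_gt h') (ne_of_gt hSpos), Real.negMulLog]
      ring
  rw [Finset.sum_congr rfl (fun i _ => hterm i), Finset.sum_sub_distrib,
    Finset.sum_neg_distrib, ← Finset.sum_mul, Real.negMulLog]
  ring


variable {α β : Type*} [Fintype α] [Fintype β]

/-- Unnormalized conditional entropy `H(A|B)` of a joint weight `p` on `α × β` (natural log). -/
noncomputable def condEnt2 (p : α × β → ℝ) : ℝ :=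
  ∑ ab, Real.negMulLog (p ab) - ∑ b, Real.negMulLog (∑ a, p (a, b))

lemma condEnt2_eq (p : α × β → ℝ) (hp : ∀ ab, 0 ≤ p ab) :
    condEnt2 p = -∑ b, ∑ a, p (a, b) * Real.log (p (a, b) / (∑ a', p (a', b))) := by
  rw [condEnt2, Fintype.sum_prod_type_right, ← Finset.sum_sub_distrib]
  rw [← Finset.sum_neg_distrib]
  refine Finset.sum_congr rfl (fun b _ => ?_)
  exact group_ent_eq (fun a => p (a, b)) (fun a => hp (a, b))

lemma condEnt2_nonneg (p : α × β → ℝ) (hp : ∀ ab, 0 ≤ p ab) : 0 ≤ condEnt2 p := by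
  rw [condEnt2, Fintype.sum_prod_type_right, ← Finset.sum_sub_distrib]
  refine Finset.sum_nonneg (fun b _ => ?_)
  have := negMulLog_sum_le (fun a => p (a, b)) (fun a => hp (a, b))
  linarith

lemma condEnt2_superadd {ι : Type*} [Fintype ι] (P : ι → α × β → ℝ)
    (hP : ∀ j ab, 0 ≤ P j ab) :
    ∑ j, condEnt2 (P j) ≤ condEnt2 (fun ab => ∑ j, P j ab) := by
  have hc := condEnt2_eq (fun ab => ∑ j, P j ab)
    (fun ab => Finset.sum_nonneg (fun j _ => hP j ab))
  rw [hc]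
  have hPj : ∀ j, condEnt2 (P j)
      = -∑ b, ∑ a, P j (a, b) * Real.log (P j (a, b) / (∑ a', P j (a', b))) :=
    fun j => condEnt2_eq (P j) (hP j)
  rw [Finset.sum_congr rfl (fun j _ => hPj j), Finset.sum_neg_distrib, neg_le_neg_iff]
  have key : ∀ b a, (∑ j, P j (a, b)) * Real.log ((∑ j, P j (a, b)) / (∑ a', ∑ j, P j (a', b)))
      ≤ ∑ j, P j (a, b) * Real.log (P j (a, b) / (∑ a', P j (a', b))) := by
    intro b a
    have hV : (∑ a', ∑ j, P j (a', b)) = ∑ j, ∑ a', P j (a', b) := Finset.sum_comm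
    rw [hV]
    refine logSum (fun j => P j (a, b)) (fun j => ∑ a', P j (a', b))
      (fun j => hP j (a, b)) (fun j => Finset.sum_nonneg (fun a' _ => hP j (a', b)))
      (fun j hj => ?_)
    exact (Finset.sum_eq_zero_iff_of_nonneg (fun a' _ => hP j (a', b))).mp hj a
      (Finset.mem_univ a)
  calc ∑ b, ∑ a, (∑ j, P j (a, b)) * Real.log ((∑ j, P j (a, b)) / (∑ a', ∑ j, P j (a', b)))
      ≤ ∑ b, ∑ a, ∑ j, P j (a, b) * Real.log (P j (a, b) / (∑ a', P j (a', b))) :=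
        Finset.sum_le_sum (fun b _ => Finset.sum_le_sum (fun a _ => key b a))
    _ = ∑ b, ∑ j, ∑ a, P j (a, b) * Real.log (P j (a, b) / (∑ a', P j (a', b))) :=
        Finset.sum_congr rfl (fun b _ => Finset.sum_comm)
    _ = ∑ j, ∑ b, ∑ a, P j (a, b) * Real.log (P j (a, b) / (∑ a', P j (a', b))) :=
        Finset.sum_comm

lemma condEnt2_prod (q : α → ℝ) (r : β → ℝ) (hr1 : ∑ b, r b = 1) :
    condEnt2 (fun ab => q ab.1 * r ab.2)
      = ∑ a, Real.negMulLog (q a) - Real.negMulLog (∑ a, q a) := by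
  have hent : ∀ (c : ℝ), ∑ b, Real.negMulLog (c * r b)
      = Real.negMulLog c + c * ∑ b, Real.negMulLog (r b) := by
    intro c
    rw [Finset.sum_congr rfl (fun b _ => Real.negMulLog_mul c (r b)),
      Finset.sum_add_distrib, ← Finset.sum_mul, hr1, one_mul, Finset.mul_sum]
  have h1 : ∑ ab : α × β, Real.negMulLog (q ab.1 * r ab.2)
      = ∑ a, Real.negMulLog (q a) + (∑ a, q a) * ∑ b, Real.negMulLog (r b) := by
    rw [Fintype.sum_prod_type]
    rw [Finset.sum_congr rfl (fun a _ => hent (q a))]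
    rw [Finset.sum_add_distrib, ← Finset.sum_mul]
  have h2 : ∑ b, Real.negMulLog (∑ a, q a * r b)
      = Real.negMulLog (∑ a, q a) + (∑ a, q a) * ∑ b, Real.negMulLog (r b) := by
    rw [Finset.sum_congr rfl (fun b _ => by rw [← Finset.sum_mul])]
    exact hent (∑ a, q a)
  simp only [condEnt2]
  rw [h1, h2]
  ring


section Support

open Real
open scoped Matrix

/-- quadratic form ⟨v|M|v⟩ -/
def qf {α : Type*} [Fintype α] (M : Matrix α α ℂ) (v : α → ℂ) : ℂ :=
  ∑ x, ∑ y, (starRingEnd ℂ) (v x) * M x y * v y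

lemma qf_dot {α : Type*} [Fintype α] (M : Matrix α α ℂ) (v : α → ℂ) :
    qf M v = dotProduct (star v) (M *ᵥ v) := by
  simp only [qf, dotProduct, Matrix.mulVec, Pi.star_apply, RCLike.star_def, Finset.mul_sum]
  exact Finset.sum_congr rfl fun x _ => Finset.sum_congr rfl fun y _ => by ring

lemma qf_re_nonneg {α : Type*} [Fintype α] {M : Matrix α α ℂ} (hM : M.PosSemidef)
    (v : α → ℂ) : 0 ≤ (qf M v).re := by
  have h := hM.dotProduct_mulVec_nonneg v
  rw [Complex.le_def] at h
  rw [qf_dot]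
  simpa using h.1

lemma qf_im_zero {α : Type*} [Fintype α] {M : Matrix α α ℂ} (hM : M.PosSemidef)
    (v : α → ℂ) : (qf M v).im = 0 := by
  have h := hM.dotProduct_mulVec_nonneg v
  rw [Complex.le_def] at h
  rw [qf_dot]
  simpa using h.2.symm

lemma qf_eq_ofReal {α : Type*} [Fintype α] {M : Matrix α α ℂ} (hM : M.PosSemidef)
    (v : α → ℂ) : qf M v = ((qf M v).re : ℂ) :=
  Complex.ext (by simp) (by simp [qf_im_zero hM])

lemma qf_sum {α ι : Type*} [Fintype α] (s : Finset ι) (M : ι → Matrix α α ℂ) (v : α → ℂ) :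
    qf (∑ j ∈ s, M j) v = ∑ j ∈ s, qf (M j) v := by
  simp only [qf, Matrix.sum_apply]
  have h1 : ∀ x y, (starRingEnd ℂ) (v x) * (∑ j ∈ s, M j x y) * v y
      = ∑ j ∈ s, (starRingEnd ℂ) (v x) * M j x y * v y := by
    intro x y; rw [Finset.mul_sum, Finset.sum_mul]
  calc ∑ x, ∑ y, (starRingEnd ℂ) (v x) * (∑ j ∈ s, M j x y) * v y
      = ∑ x, ∑ j ∈ s, ∑ y, (starRingEnd ℂ) (v x) * M j x y * v y := by
        refine Finset.sum_congr rfl fun x _ => ?_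
        rw [Finset.sum_congr rfl fun y _ => h1 x y, Finset.sum_comm]
    _ = ∑ j ∈ s, ∑ x, ∑ y, (starRingEnd ℂ) (v x) * M j x y * v y := Finset.sum_comm

lemma qf_smul {α : Type*} [Fintype α] (c : ℝ) (M : Matrix α α ℂ) (v : α → ℂ) :
    qf (c • M) v = (c : ℂ) * qf M v := by
  simp only [qf, Matrix.smul_apply, Complex.real_smul, Finset.mul_sum]
  refine Finset.sum_congr rfl fun x _ => Finset.sum_congr rfl fun y _ => by ring

/-- Completeness of an orthonormal basis. -/
lemma onb_complete {d : ℕ} {B : Fin d → Fin d → ℂ} (hB : IsONB B) (x y : Fin d) :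
    ∑ i, (starRingEnd ℂ) (B i x) * B i y = if x = y then 1 else 0 := by
  classical
  set M : Matrix (Fin d) (Fin d) ℂ := Matrix.of (fun i x => B i x) with hM
  have h1 : M * Mᴴ = 1 := by
    ext i j
    have h := congrArg (starRingEnd ℂ) (hB i j)
    simp only [map_sum, map_mul, Complex.conj_conj, apply_ite (starRingEnd ℂ),
      map_one, map_zero] at h
    simp only [Matrix.mul_apply, Matrix.conjTranspose_apply, Matrix.one_apply, hM,
      Matrix.of_apply, RCLike.star_def]
    exact h
  have h2 : Mᴴ * M = 1 := mul_eq_one_comm.mp h1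
  have := congrFun (congrFun h2 x) y
  simp only [Matrix.mul_apply, Matrix.conjTranspose_apply, Matrix.one_apply, hM,
    Matrix.of_apply, RCLike.star_def] at this
  simpa using this

lemma prod_delta {ι : Type*} [Fintype ι] {d : ℕ} (x y : ι → Fin d) :
    (∏ m, if x m = y m then (1:ℂ) else 0) = if x = y then 1 else 0 := by
  by_cases h : x = y
  · simp [h]
  · rw [if_neg h]
    obtain ⟨m, hm⟩ := Function.ne_iff.mp h
    exact Finset.prod_eq_zero (Finset.mem_univ m) (by simp [hm])

/-- Summing the quadratic form over a product basis collapses to the trace. -/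
lemma sum_qf_basis {ι : Type*} [Fintype ι] [DecidableEq ι] {d : ℕ}
    (T : Matrix (ι → Fin d) (ι → Fin d) ℂ) (C : ι → Fin d → Fin d → ℂ)
    (hC : ∀ m, IsONB (C m)) :
    ∑ g : ι → Fin d, qf T (fun y => ∏ m, C m (g m) (y m)) = T.trace := by
  simp only [qf, map_prod]
  have step : ∀ x y : ι → Fin d,
      ∑ g : ι → Fin d, (∏ m, (starRingEnd ℂ) (C m (g m) (x m))) * T x y *
        (∏ m, C m (g m) (y m)) = T x y * (if x = y then 1 else 0) := by
    intro x y
    have hsum : ∑ g : ι → Fin d,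
        (∏ m, ((starRingEnd ℂ) (C m (g m) (x m)) * C m (g m) (y m)))
        = ∏ m, ∑ c, (starRingEnd ℂ) (C m c (x m)) * C m c (y m) :=
      (Fintype.prod_sum (fun m c => (starRingEnd ℂ) (C m c (x m)) * C m c (y m))).symm
    calc ∑ g : ι → Fin d, (∏ m, (starRingEnd ℂ) (C m (g m) (x m))) * T x y *
          (∏ m, C m (g m) (y m))
        = T x y * ∑ g : ι → Fin d,
            (∏ m, ((starRingEnd ℂ) (C m (g m) (x m)) * C m (g m) (y m))) := by
          rw [Finset.mul_sum]
          refine Finset.sum_congr rfl fun g _ => ?_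
          rw [Finset.prod_mul_distrib]; ring
      _ = T x y * (if x = y then 1 else 0) := by
          rw [hsum]
          congr 1
          rw [Finset.prod_congr rfl fun m _ => onb_complete (hC m) (x m) (y m)]
          exact prod_delta x y
  rw [Finset.sum_comm]
  calc ∑ x, ∑ g : ι → Fin d, ∑ y, (∏ m, (starRingEnd ℂ) (C m (g m) (x m))) * T x y *
        (∏ m, C m (g m) (y m))
      = ∑ x, ∑ y, T x y * (if x = y then 1 else 0) := by
        refine Finset.sum_congr rfl fun x _ => ?_
        rw [Finset.sum_comm]
        exact Finset.sum_congr rfl fun y _ => step x y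
    _ = T.trace := by
        simp [Matrix.trace, Matrix.diag, mul_ite]

end Support


section Layer3

variable {n d : ℕ}

@[simp] lemma insertAt_same (l : Fin n) (i : Fin d) (g : {m : Fin n // m ≠ l} → Fin d) :
    insertAt l i g l = i := by simp [insertAt]

lemma insertAt_ne (l : Fin n) (i : Fin d) (g : {m : Fin n // m ≠ l} → Fin d)
    (m : {m : Fin n // m ≠ l}) : insertAt l i g m.1 = g m := by
  simp [insertAt, m.2]

@[simp] lemma restrictAt_insertAt (l : Fin n) (i : Fin d) (g : {m : Fin n // m ≠ l} → Fin d) :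
    restrictAt l (insertAt l i g) = g := by
  funext m; simp [restrictAt, insertAt, m.2]

/-- Splitting a joint index at position `l`. -/
def splitEquiv (l : Fin n) : (Fin d × ({m : Fin n // m ≠ l} → Fin d)) ≃ Idx n d where
  toFun p := insertAt l p.1 p.2
  invFun x := (x l, restrictAt l x)
  left_inv p := by
    refine Prod.ext ?_ ?_
    · simp
    · simp
  right_inv x := by
    funext m
    by_cases h : m = l
    · subst h; simp [insertAt]
    · simp [insertAt, h, restrictAt]

lemma sum_split {M : Type*} [AddCommMonoid M] (l : Fin n) (F : Idx n d → M) :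
    ∑ x, F x = ∑ i, ∑ g, F (insertAt l i g) := by
  rw [← Equiv.sum_comp (splitEquiv (d := d) l) F, Fintype.sum_prod_type]
  rfl

lemma prod_split {M : Type*} [CommMonoid M] (l : Fin n) (F : Fin n → M) :
    ∏ m, F m = F l * ∏ m : {m : Fin n // m ≠ l}, F m.1 := by
  rw [Fintype.prod_eq_mul_prod_compl l F]
  congr 1
  exact Finset.prod_subtype {l}ᶜ (fun m => by simp) F

lemma margAt_nonneg (p : Idx n d → ℝ) (hp : ∀ x, 0 ≤ p x) (l : Fin n) (i : Fin d) :
    0 ≤ margAt p l i :=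
  Finset.sum_nonneg fun x _ => by by_cases h : x l = i <;> simp [margAt, h, hp x]

lemma sum_margAt (p : Idx n d → ℝ) (l : Fin n) : ∑ i, margAt p l i = ∑ x, p x := by
  unfold margAt
  rw [Finset.sum_comm]
  exact Finset.sum_congr rfl fun x _ => by simp

/-- Unnormalized conditional entropy of the subsystem `l` given the rest. -/
def condIdx (l : Fin n) (p : Idx n d → ℝ) : ℝ :=
  ∑ x, Real.negMulLog (p x)
    - ∑ g : {m : Fin n // m ≠ l} → Fin d, Real.negMulLog (margRest p l g)

lemma condIdx_eq_condEnt2 (l : Fin n) (p : Idx n d → ℝ) :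
    condIdx l p = condEnt2
      (fun ab : Fin d × ({m : Fin n // m ≠ l} → Fin d) => p (insertAt l ab.1 ab.2)) := by
  unfold condIdx condEnt2
  congr 1
  rw [sum_split l, Fintype.sum_prod_type]

lemma condIdx_nonneg (l : Fin n) (p : Idx n d → ℝ) (hp : ∀ x, 0 ≤ p x) :
    0 ≤ condIdx l p := by
  rw [condIdx_eq_condEnt2]
  exact condEnt2_nonneg _ (fun ab => hp _)

lemma condIdx_superadd {ι : Type*} [Fintype ι] (l : Fin n) (P : ι → Idx n d → ℝ)
    (hP : ∀ j x, 0 ≤ P j x) :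
    ∑ j, condIdx l (P j) ≤ condIdx l (fun x => ∑ j, P j x) := by
  simp only [condIdx_eq_condEnt2]
  exact condEnt2_superadd (fun j ab => P j (insertAt l ab.1 ab.2)) (fun j ab => hP j _)

lemma condIdx_prod (l : Fin n) (q : Fin d → ℝ)
    (r : ({m : Fin n // m ≠ l} → Fin d) → ℝ) (hr1 : ∑ g, r g = 1) :
    condIdx l (fun x => q (x l) * r (restrictAt l x))
      = ∑ a, Real.negMulLog (q a) - Real.negMulLog (∑ a, q a) := by
  rw [condIdx_eq_condEnt2]
  have hfun : (fun ab : Fin d × ({m : Fin n // m ≠ l} → Fin d) =>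
      q ((insertAt l ab.1 ab.2) l) * r (restrictAt l (insertAt l ab.1 ab.2)))
      = fun ab => q ab.1 * r ab.2 := by
    funext ab; simp
  rw [hfun]
  exact condEnt2_prod q r hr1

lemma shannon_eq {α : Type*} [Fintype α] (p : α → ℝ) :
    shannon p = (∑ a, Real.negMulLog (p a)) / Real.log 2 := by
  unfold shannon
  rw [Finset.sum_div]
  refine Finset.sum_congr rfl fun a _ => ?_
  rw [Real.negMulLog, Real.logb]
  ring

lemma shannon_le_logb {α : Type*} [Fintype α] (p : α → ℝ) (h0 : ∀ a, 0 ≤ p a)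
    (h1 : ∑ a, p a = 1) : shannon p ≤ Real.logb 2 (Fintype.card α) := by
  rw [shannon_eq, Real.logb]
  exact (div_le_div_iff_of_pos_right (Real.log_pos one_lt_two)).mpr
    (sum_negMulLog_le_log_card p h0 h1)

lemma mutualInfo_eq (p : Idx n d → ℝ) (l : Fin n) :
    mutualInfo p l = shannon (margAt p l) - condIdx l p / Real.log 2 := by
  unfold mutualInfo condIdx
  rw [shannon_eq p, shannon_eq (margRest p l)]
  ring

lemma jointProb_eq_qf (ρ : Matrix (Idx n d) (Idx n d) ℂ) (B : Fin n → Fin d → Fin d → ℂ)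
    (i : Idx n d) :
    jointProb ρ B i = (qf ρ (fun y => ∏ l, B l (i l) (y l))).re := by
  unfold jointProb qf
  congr 1
  refine Finset.sum_congr rfl fun x _ => Finset.sum_congr rfl fun y _ => ?_
  rw [map_prod]

lemma jointProb_nonneg {ρ : Matrix (Idx n d) (Idx n d) ℂ} (hρ : ρ.PosSemidef)
    (B : Fin n → Fin d → Fin d → ℂ) (i : Idx n d) : 0 ≤ jointProb ρ B i := by
  rw [jointProb_eq_qf]
  exact qf_re_nonneg hρ _

lemma sum_jointProb {ρ : Matrix (Idx n d) (Idx n d) ℂ} (hρ : ρ.trace = 1)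
    (B : Fin n → Fin d → Fin d → ℂ) (hB : ∀ l, IsONB (B l)) :
    ∑ i, jointProb ρ B i = 1 := by
  have h := sum_qf_basis ρ B hB
  calc ∑ i, jointProb ρ B i
      = (∑ i : Idx n d, qf ρ (fun y => ∏ l, B l (i l) (y l))).re := by
        rw [Complex.re_sum]
        exact Finset.sum_congr rfl fun i _ => jointProb_eq_qf ρ B i
    _ = 1 := by rw [h, hρ]; simp

lemma sum_qf_single {d : ℕ} {σ : Matrix (Fin d) (Fin d) ℂ} {B : Fin d → Fin d → ℂ}
    (hB : IsONB B) : ∑ i, qf σ (B i) = σ.trace := by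
  unfold qf
  rw [Finset.sum_comm]
  have hx : ∀ x, ∑ i, ∑ y, (starRingEnd ℂ) (B i x) * σ x y * B i y
      = ∑ y, σ x y * (if x = y then 1 else 0) := by
    intro x
    rw [Finset.sum_comm]
    refine Finset.sum_congr rfl fun y _ => ?_
    calc ∑ i, (starRingEnd ℂ) (B i x) * σ x y * B i y
        = σ x y * ∑ i, (starRingEnd ℂ) (B i x) * B i y := by
          rw [Finset.mul_sum]
          exact Finset.sum_congr rfl fun i _ => by ring
      _ = σ x y * (if x = y then 1 else 0) := by rw [onb_complete hB]
  rw [Finset.sum_congr rfl fun x _ => hx x]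
  simp [Matrix.trace, Matrix.diag, mul_ite]

lemma prob1_eq_qf {d : ℕ} (σ : Matrix (Fin d) (Fin d) ℂ) (B : Fin d → Fin d → ℂ)
    (i : Fin d) : prob1 σ B i = (qf σ (B i)).re := rfl

lemma sum_prob1 {d : ℕ} {σ : Matrix (Fin d) (Fin d) ℂ} (hσ : σ.trace = 1)
    {B : Fin d → Fin d → ℂ} (hB : IsONB B) : ∑ i, prob1 σ B i = 1 := by
  simp only [prob1_eq_qf]
  rw [← Complex.re_sum, sum_qf_single hB, hσ]
  simp

lemma prob1_nonneg {d : ℕ} {σ : Matrix (Fin d) (Fin d) ℂ} (hσ : σ.PosSemidef)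
    (B : Fin d → Fin d → ℂ) (i : Fin d) : 0 ≤ prob1 σ B i :=
  qf_re_nonneg hσ _

/-- Outcome distribution of product-basis measurement on a multi-site system. -/
def pjoint {ι : Type*} [Fintype ι] [DecidableEq ι] {d : ℕ} (T : Matrix (ι → Fin d) (ι → Fin d) ℂ)
    (C : ι → Fin d → Fin d → ℂ) (g : ι → Fin d) : ℝ :=
  (qf T (fun y => ∏ m, C m (g m) (y m))).re

lemma pjoint_nonneg {ι : Type*} [Fintype ι] [DecidableEq ι] {d : ℕ}
    {T : Matrix (ι → Fin d) (ι → Fin d) ℂ} (hT : T.PosSemidef)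
    (C : ι → Fin d → Fin d → ℂ) (g : ι → Fin d) : 0 ≤ pjoint T C g :=
  qf_re_nonneg hT _

lemma sum_pjoint {ι : Type*} [Fintype ι] [DecidableEq ι] {d : ℕ}
    {T : Matrix (ι → Fin d) (ι → Fin d) ℂ} (hT : T.trace = 1)
    (C : ι → Fin d → Fin d → ℂ) (hC : ∀ m, IsONB (C m)) :
    ∑ g, pjoint T C g = 1 := by
  unfold pjoint
  rw [← Complex.re_sum, sum_qf_basis T C hC, hT]
  simp

lemma jointProb_mix {d J : ℕ} (c : Fin J → Fin 3 → ℝ)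
    (A : Fin J → Fin 3 → Matrix (Idx 3 d) (Idx 3 d) ℂ)
    (B : Fin 3 → Fin d → Fin d → ℂ) (x : Idx 3 d) :
    jointProb (∑ j, ∑ l, c j l • A j l) B x = ∑ j, ∑ l, c j l * jointProb (A j l) B x := by
  simp only [jointProb_eq_qf, qf_sum, qf_smul, Complex.re_sum, Complex.re_ofReal_mul]

lemma jointProb_assembleAt {d : ℕ} (l : Fin 3) (σ : Matrix (Fin d) (Fin d) ℂ)
    (τ : Matrix ({m : Fin 3 // m ≠ l} → Fin d) ({m : Fin 3 // m ≠ l} → Fin d) ℂ)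
    (hσ : σ.PosSemidef) (hτ : τ.PosSemidef)
    (B : Fin 3 → Fin d → Fin d → ℂ) (x : Idx 3 d) :
    jointProb (assembleAt l σ τ) B x
      = prob1 σ (B l) (x l) * pjoint τ (fun m => B m.1) (restrictAt l x) := by
  rw [jointProb_eq_qf, prob1_eq_qf]
  unfold pjoint
  set w : ({m : Fin 3 // m ≠ l} → Fin d) → ℂ :=
    fun g' => ∏ m : {m : Fin 3 // m ≠ l}, B m.1 (x m.1) (g' m) with hw
  have hwr : (fun y => ∏ m : {m : Fin 3 // m ≠ l}, B m.1 ((restrictAt l x) m) (y m)) = w := rfl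
  rw [hwr]
  have hqf : qf (assembleAt l σ τ) (fun y => ∏ m, B m (x m) (y m))
      = qf σ (B l (x l)) * qf τ w := by
    have hv : ∀ (i : Fin d) (g : {m : Fin 3 // m ≠ l} → Fin d),
        (∏ m, B m (x m) ((insertAt l i g) m)) = B l (x l) i * w g := by
      intro i g
      rw [prod_split l]
      congr 1
      · rw [insertAt_same]
      · exact Finset.prod_congr rfl fun m _ => by rw [insertAt_ne]
    have hρ0 : ∀ i g i' g', assembleAt l σ τ (insertAt l i g) (insertAt l i' g')
        = σ i i' * τ g g' := by
      intro i g i' g'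
      simp [assembleAt]
    calc qf (assembleAt l σ τ) (fun y => ∏ m, B m (x m) (y m))
        = ∑ i, ∑ g, ∑ i', ∑ g',
            (starRingEnd ℂ) (B l (x l) i * w g) * (σ i i' * τ g g')
              * (B l (x l) i' * w g') := by
          unfold qf
          rw [sum_split l]
          refine Finset.sum_congr rfl fun i _ => Finset.sum_congr rfl fun g _ => ?_
          rw [sum_split l]
          refine Finset.sum_congr rfl fun i' _ => Finset.sum_congr rfl fun g' _ => ?_
          simp only [hv, hρ0]
      _ = ∑ i, ∑ g, ∑ i', ∑ g',
            ((starRingEnd ℂ) (B l (x l) i) * σ i i' * B l (x l) i')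
              * ((starRingEnd ℂ) (w g) * τ g g' * w g') := by
          refine Finset.sum_congr rfl fun i _ => Finset.sum_congr rfl fun g _ =>
            Finset.sum_congr rfl fun i' _ => Finset.sum_congr rfl fun g' _ => ?_
          rw [map_mul]
          ring
      _ = qf σ (B l (x l)) * qf τ w := by
          unfold qf
          rw [Finset.sum_mul_sum]
          refine Finset.sum_congr rfl fun i _ => Finset.sum_congr rfl fun g _ => ?_
          rw [Finset.sum_mul_sum]
  rw [hqf, qf_eq_ofReal hσ, qf_eq_ofReal hτ, ← Complex.ofReal_mul]
  simp

end Layer3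

/-- Lemma 7: every biseparable tripartite state satisfies `𝒞_N(ρ) ≤ log₂ d − f/(3N)`;
hence any state exceeding this bound is genuinely tripartite entangled. -/
theorem biseparable_CN_bound
    (d N : ℕ) (f : ℝ) (hf : EntropicBound d N f)
    (ρ : Matrix (Idx 3 d) (Idx 3 d) ℂ) (hρ : IsDensityOp ρ) (hbisep : Bisep3 ρ) :
    ∀ x ∈ CNvalues N ρ, x ≤ Real.logb 2 d - f / (3 * N) := by
  rintro x ⟨B, ⟨hONB, hMUB⟩, rfl⟩
  have hρpsd := hρ.1
  have hρtr := hρ.2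
  -- d ≥ 1
  rcases Nat.eq_zero_or_pos d with hd0 | hd
  · exfalso
    subst hd0
    haveI : IsEmpty (Idx 3 0) := ⟨fun x => (x 0).elim0⟩
    have h0 : Matrix.trace ρ = 0 := by simp [Matrix.trace]
    rw [hρtr] at h0
    exact one_ne_zero h0
  have hd1 : (1:ℝ) ≤ d := by exact_mod_cast hd
  have hlogb0 : 0 ≤ Real.logb 2 d := Real.logb_nonneg one_lt_two hd1
  -- N = 0
  rcases Nat.eq_zero_or_pos N with hN0 | hN
  · subst hN0
    have h0 : CNval 0 ρ B = 0 := by simp [CNval]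
    rw [h0]
    simpa using hlogb0
  have hNpos : (0:ℝ) < (N:ℝ) := by exact_mod_cast hN
  have hlog2 : (0:ℝ) < Real.log 2 := Real.log_pos one_lt_two
  obtain ⟨J, c, σ, τ, hc0, hc1, hσ, hτ, hρeq⟩ := hbisep
  -- branch distributions
  set P : Fin N → Fin J × Fin 3 → Idx 3 d → ℝ :=
    fun k jl x => c jl.1 jl.2 *
      jointProb (assembleAt jl.2 (σ jl.1 jl.2) (τ jl.1 jl.2)) (B k) x with hP
  have hPnn : ∀ k jl x, 0 ≤ P k jl x := by
    intro k jl x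
    refine mul_nonneg (hc0 _ _) ?_
    rw [jointProb_assembleAt _ _ _ (hσ jl.1 jl.2).1 (hτ jl.1 jl.2).1]
    exact mul_nonneg (prob1_nonneg (hσ jl.1 jl.2).1 _ _)
      (pjoint_nonneg (hτ jl.1 jl.2).1 _ _)
  have hdecomp : ∀ k, (fun x => ∑ jl : Fin J × Fin 3, P k jl x) = jointProb ρ (B k) := by
    intro k
    funext x
    rw [hρeq, jointProb_mix, Fintype.sum_prod_type]
  have hsup : ∀ k l, ∑ jl : Fin J × Fin 3, condIdx l (P k jl)
      ≤ condIdx l (jointProb ρ (B k)) := by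
    intro k l
    have h := condIdx_superadd l (P k) (hPnn k)
    rwa [hdecomp k] at h
  -- matched-branch value
  have hmatch : ∀ k (j : Fin J) (l : Fin 3),
      condIdx l (P k (j, l)) = c j l * ∑ a, Real.negMulLog (prob1 (σ j l) (B k l) a) := by
    intro k j l
    have hq1 : ∑ a, prob1 (σ j l) (B k l) a = 1 := sum_prob1 (hσ j l).2 (hONB k l)
    have hr1 : ∑ g, pjoint (τ j l) (fun m => B k m.1) g = 1 :=
      sum_pjoint (hτ j l).2 _ (fun m => hONB k m.1)
    have hfun : P k (j, l) = fun x =>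
        (fun a => c j l * prob1 (σ j l) (B k l) a) (x l) *
          (pjoint (τ j l) (fun m => B k m.1)) (restrictAt l x) := by
      funext x
      simp only [hP]
      rw [jointProb_assembleAt _ _ _ (hσ j l).1 (hτ j l).1]
      ring
    rw [hfun, condIdx_prod l (fun a => c j l * prob1 (σ j l) (B k l) a)
      (pjoint (τ j l) (fun m => B k m.1)) hr1]
    have hsum : ∑ a, c j l * prob1 (σ j l) (B k l) a = c j l := by
      rw [← Finset.mul_sum, hq1, mul_one]
    rw [hsum,
      Finset.sum_congr rfl fun a _ => Real.negMulLog_mul (c j l) (prob1 (σ j l) (B k l) a),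
      Finset.sum_add_distrib, ← Finset.sum_mul, hq1, one_mul, ← Finset.mul_sum]
    ring
  -- entropic uncertainty bound per branch
  have hEB : ∀ (j : Fin J) (l : Fin 3),
      f * Real.log 2 ≤ ∑ k, ∑ a, Real.negMulLog (prob1 (σ j l) (B k l) a) := by
    intro j l
    have h := hf (fun k => B k l) (fun k => hONB k l)
      (fun k k' hkk' => hMUB l k k' hkk') (σ j l) (hσ j l)
    have he : ∑ k, shannon (prob1 (σ j l) (B k l))
        = (∑ k, ∑ a, Real.negMulLog (prob1 (σ j l) (B k l) a)) / Real.log 2 := by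
      rw [Finset.sum_div]
      exact Finset.sum_congr rfl fun k _ => shannon_eq _
    rw [he] at h
    calc f * Real.log 2
        ≤ ((∑ k, ∑ a, Real.negMulLog (prob1 (σ j l) (B k l) a)) / Real.log 2)
            * Real.log 2 := by
          exact mul_le_mul_of_nonneg_right h (le_of_lt hlog2)
      _ = ∑ k, ∑ a, Real.negMulLog (prob1 (σ j l) (B k l) a) := by
          field_simp
  -- key lower bound on total conditional entropy
  have hKey : f * Real.log 2 ≤ ∑ k, ∑ l, condIdx l (jointProb ρ (B k)) := by
    have step1 : ∀ k, ∑ jl : Fin J × Fin 3, condIdx jl.2 (P k jl)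
        ≤ ∑ l, condIdx l (jointProb ρ (B k)) := by
      intro k
      calc ∑ jl : Fin J × Fin 3, condIdx jl.2 (P k jl)
          ≤ ∑ jl : Fin J × Fin 3, ∑ l, condIdx l (P k jl) := by
            refine Finset.sum_le_sum fun jl _ => ?_
            exact Finset.single_le_sum
              (fun l _ => condIdx_nonneg l _ (hPnn k jl)) (Finset.mem_univ jl.2)
        _ = ∑ l, ∑ jl : Fin J × Fin 3, condIdx l (P k jl) := Finset.sum_comm
        _ ≤ ∑ l, condIdx l (jointProb ρ (B k)) :=
            Finset.sum_le_sum fun l _ => hsup k l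
    have hre : ∑ j, ∑ l, c j l * (∑ k, ∑ a, Real.negMulLog (prob1 (σ j l) (B k l) a))
        = ∑ k, ∑ jl : Fin J × Fin 3, condIdx jl.2 (P k jl) := by
      calc ∑ j, ∑ l, c j l * (∑ k, ∑ a, Real.negMulLog (prob1 (σ j l) (B k l) a))
          = ∑ j, ∑ l, ∑ k, c j l * ∑ a, Real.negMulLog (prob1 (σ j l) (B k l) a) := by
            refine Finset.sum_congr rfl fun j _ => Finset.sum_congr rfl fun l _ => ?_
            rw [Finset.mul_sum]
        _ = ∑ j, ∑ k, ∑ l, c j l * ∑ a, Real.negMulLog (prob1 (σ j l) (B k l) a) :=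
            Finset.sum_congr rfl fun j _ => Finset.sum_comm
        _ = ∑ k, ∑ j, ∑ l, c j l * ∑ a, Real.negMulLog (prob1 (σ j l) (B k l) a) :=
            Finset.sum_comm
        _ = ∑ k, ∑ jl : Fin J × Fin 3, condIdx jl.2 (P k jl) := by
            refine Finset.sum_congr rfl fun k _ => ?_
            rw [Fintype.sum_prod_type]
            exact Finset.sum_congr rfl fun j _ => Finset.sum_congr rfl fun l _ =>
              (hmatch k j l).symm
    calc f * Real.log 2 = (∑ j, ∑ l, c j l) * (f * Real.log 2) := by
          rw [hc1, one_mul]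
      _ = ∑ j, ∑ l, c j l * (f * Real.log 2) := by
          rw [Finset.sum_mul]
          exact Finset.sum_congr rfl fun j _ => by rw [Finset.sum_mul]
      _ ≤ ∑ j, ∑ l, c j l * (∑ k, ∑ a, Real.negMulLog (prob1 (σ j l) (B k l) a)) := by
          refine Finset.sum_le_sum fun j _ => Finset.sum_le_sum fun l _ => ?_
          exact mul_le_mul_of_nonneg_left (hEB j l) (hc0 j l)
      _ = ∑ k, ∑ jl : Fin J × Fin 3, condIdx jl.2 (P k jl) := hre
      _ ≤ ∑ k, ∑ l, condIdx l (jointProb ρ (B k)) :=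
          Finset.sum_le_sum fun k _ => step1 k
  -- marginal entropy bound
  have hA : ∀ (k : Fin N) (l : Fin 3),
      shannon (margAt (jointProb ρ (B k)) l) ≤ Real.logb 2 d := by
    intro k l
    have h0 : ∀ x, 0 ≤ jointProb ρ (B k) x := fun x => jointProb_nonneg hρpsd (B k) x
    have h1 : ∑ i, margAt (jointProb ρ (B k)) l i = 1 := by
      rw [sum_margAt]
      exact sum_jointProb hρtr (B k) (hONB k)
    have h := shannon_le_logb _ (margAt_nonneg _ h0 l) h1
    simpa using h
  -- total mutual information bound
  have hMIsum : ∑ k, ∑ l, mutualInfo (jointProb ρ (B k)) l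
      ≤ 3 * (N:ℝ) * Real.logb 2 d - f := by
    have e1 : ∑ k, ∑ l, mutualInfo (jointProb ρ (B k)) l
        = (∑ k, ∑ l, shannon (margAt (jointProb ρ (B k)) l))
          - (∑ k, ∑ l, condIdx l (jointProb ρ (B k))) / Real.log 2 := by
      rw [Finset.sum_div, ← Finset.sum_sub_distrib]
      refine Finset.sum_congr rfl fun k _ => ?_
      rw [Finset.sum_div, ← Finset.sum_sub_distrib]
      exact Finset.sum_congr rfl fun l _ => mutualInfo_eq _ l
    rw [e1]
    have hAsum : ∑ k, ∑ l, shannon (margAt (jointProb ρ (B k)) l)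
        ≤ 3 * (N:ℝ) * Real.logb 2 d := by
      calc ∑ k, ∑ l, shannon (margAt (jointProb ρ (B k)) l)
          ≤ ∑ k : Fin N, ∑ l : Fin 3, Real.logb 2 d :=
            Finset.sum_le_sum fun k _ => Finset.sum_le_sum fun l _ => hA k l
        _ = 3 * (N:ℝ) * Real.logb 2 d := by
            simp [Finset.sum_const]
            ring
    have hCond : f ≤ (∑ k, ∑ l, condIdx l (jointProb ρ (B k))) / Real.log 2 := by
      rw [le_div_iff₀ hlog2]
      exact hKey
    linarith
  -- finish
  have hCN : CNval N ρ B = (1 / (3 * (N:ℝ))) *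
      ∑ k, ∑ l, mutualInfo (jointProb ρ (B k)) l := by
    unfold CNval
    norm_num
  rw [hCN]
  have h3N : (0:ℝ) < 3 * (N:ℝ) := by positivity
  calc (1 / (3 * (N:ℝ))) * ∑ k, ∑ l, mutualInfo (jointProb ρ (B k)) l
      ≤ (1 / (3 * (N:ℝ))) * (3 * (N:ℝ) * Real.logb 2 d - f) := by
        exact mul_le_mul_of_nonneg_left hMIsum (by positivity)
    _ = Real.logb 2 d - f / (3 * (N:ℝ)) := by
        field_simp
  

end
end Paper
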